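/- Let σ ≥ 2L, x ∈ Q, z ∈ ℝⁿ, and let x⁺ ∈ Q satisfy ‖∇M_{x,σ}(x⁺) + ψ'(x⁺)‖ ≤ (σ/4)‖x⁺ − x‖² for some ψ'(x⁺) ∈ ∂ψ(x⁺). Suppose ‖g − ∇f(x)‖ ≤ δ_g and ‖B − ∇²f(z)‖ ≤ δ_B for some δ_g, δ_B ≥ 0. Then, with r := ‖x⁺ − x‖, one has σ·r³ ≥ (1/(4σ^{1/2}))·‖∇f(x⁺) + ψ'(x⁺)‖^{3/2} − (1/(4σ²))·(δ_B³ + L³‖x − z‖³) − δ_g^{3/2}/(2σ^{1/2}). -/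

import Mathlib

open RealInnerProductSpace

lemma sq_cube_ineq (a b : ℝ) (ha : 0 ≤ a) (hb : 0 ≤ b) :
    (a ^ 2 + b ^ 2) ^ 3 ≤ 2 * (a ^ 3 + b ^ 3) ^ 2 := by
  have key : 2 * (a ^ 3 + b ^ 3) ^ 2 - (a ^ 2 + b ^ 2) ^ 3
      = (a - b) ^ 2 * (a ^ 4 + 2 * a ^ 3 * b + 2 * a * b ^ 3 + b ^ 4) := by ring
  nlinarith [mul_nonneg (sq_nonneg (a - b))
    (show (0:ℝ) ≤ a ^ 4 + 2 * a ^ 3 * b + 2 * a * b ^ 3 + b ^ 4 by positivity)]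

lemma sqrt_cube_add (X Y : ℝ) (hX : 0 ≤ X) (hY : 0 ≤ Y) :
    Real.sqrt (X + Y) ^ 3 ≤ Real.sqrt 2 * (Real.sqrt X ^ 3 + Real.sqrt Y ^ 3) := by
  have ha : 0 ≤ Real.sqrt X := Real.sqrt_nonneg _
  have hb : 0 ≤ Real.sqrt Y := Real.sqrt_nonneg _
  have hL0 : 0 ≤ Real.sqrt (X + Y) ^ 3 := pow_nonneg (Real.sqrt_nonneg _) _
  have hR0 : 0 ≤ Real.sqrt 2 * (Real.sqrt X ^ 3 + Real.sqrt Y ^ 3) :=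
    mul_nonneg (Real.sqrt_nonneg _) (by positivity)
  have hle : (Real.sqrt (X + Y) ^ 3) ^ 2 ≤ (Real.sqrt 2 * (Real.sqrt X ^ 3 + Real.sqrt Y ^ 3)) ^ 2 := by
    have h1 : (Real.sqrt (X + Y) ^ 3) ^ 2 = (X + Y) ^ 3 := by
      rw [← pow_mul, mul_comm, pow_mul, Real.sq_sqrt (by linarith)]
    have h2 : (Real.sqrt 2 * (Real.sqrt X ^ 3 + Real.sqrt Y ^ 3)) ^ 2
        = 2 * (Real.sqrt X ^ 3 + Real.sqrt Y ^ 3) ^ 2 := by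
      rw [mul_pow, Real.sq_sqrt (by norm_num : (0:ℝ) ≤ 2)]
    rw [h1, h2]
    have hXa : X = Real.sqrt X ^ 2 := (Real.sq_sqrt hX).symm
    have hYb : Y = Real.sqrt Y ^ 2 := (Real.sq_sqrt hY).symm
    calc (X + Y) ^ 3 = (Real.sqrt X ^ 2 + Real.sqrt Y ^ 2) ^ 3 := by rw [← hXa, ← hYb]
      _ ≤ 2 * (Real.sqrt X ^ 3 + Real.sqrt Y ^ 3) ^ 2 := sq_cube_ineq _ _ ha hb
  have := Real.sqrt_le_sqrt hle
  rwa [Real.sqrt_sq hL0, Real.sqrt_sq hR0] at this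

set_option maxHeartbeats 1000000 in
lemma scalar_main (s u p r c e : ℝ) (hs : 0 < s) (hu : 0 ≤ u) (hp : 0 ≤ p)
    (hr : 0 ≤ r) (hc : 0 ≤ c) (he : 0 ≤ e)
    (h : u ^ 2 ≤ s ^ 2 * r ^ 2 + p ^ 2 + c * r + e * r) :
    u ^ 3 / (4 * s) ≤ s ^ 2 * r ^ 3 + (c ^ 3 + e ^ 3) / (4 * (s ^ 2) ^ 2) + p ^ 3 / (2 * s) := by
  set γ := Real.sqrt c with hγ
  set ε := Real.sqrt e with hε
  set ρ := Real.sqrt r with hρ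
  have hγ0 : 0 ≤ γ := Real.sqrt_nonneg _
  have hε0 : 0 ≤ ε := Real.sqrt_nonneg _
  have hρ0 : 0 ≤ ρ := Real.sqrt_nonneg _
  have hc2 : γ ^ 2 = c := Real.sq_sqrt hc
  have he2 : ε ^ 2 = e := Real.sq_sqrt he
  have hr2 : ρ ^ 2 = r := Real.sq_sqrt hr
  have hu2 : u ≤ Real.sqrt ((s ^ 2 * r ^ 2 + p ^ 2) + (c * r + e * r)) := by
    have h' : u ^ 2 ≤ (s ^ 2 * r ^ 2 + p ^ 2) + (c * r + e * r) := by linarith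
    have := Real.sqrt_le_sqrt h'
    rwa [Real.sqrt_sq hu] at this
  have h3 : u ^ 3 ≤ Real.sqrt ((s ^ 2 * r ^ 2 + p ^ 2) + (c * r + e * r)) ^ 3 :=
    pow_le_pow_left₀ hu hu2 3
  have hsplit1 := sqrt_cube_add (s ^ 2 * r ^ 2 + p ^ 2) (c * r + e * r) (by positivity)
    (by positivity)
  have hsplit2 := sqrt_cube_add (s ^ 2 * r ^ 2) (p ^ 2) (by positivity) (sq_nonneg p)
  have hsplit3 := sqrt_cube_add (c * r) (e * r) (mul_nonneg hc hr) (mul_nonneg he hr)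
  have e1 : Real.sqrt (s ^ 2 * r ^ 2) = s * r := by
    rw [show s ^ 2 * r ^ 2 = (s * r) ^ 2 by ring, Real.sqrt_sq (by positivity)]
  have e2 : Real.sqrt (p ^ 2) = p := Real.sqrt_sq hp
  have e3 : Real.sqrt (c * r) = γ * ρ := Real.sqrt_mul hc r
  have e4 : Real.sqrt (e * r) = ε * ρ := Real.sqrt_mul he r
  rw [e1, e2] at hsplit2
  rw [e3, e4] at hsplit3
  have h22 : Real.sqrt 2 * Real.sqrt 2 = 2 := Real.mul_self_sqrt (by norm_num)
  have hcube : u ^ 3 ≤ 2 * ((s * r) ^ 3 + p ^ 3 + (γ * ρ) ^ 3 + (ε * ρ) ^ 3) := by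
    calc u ^ 3 ≤ Real.sqrt ((s ^ 2 * r ^ 2 + p ^ 2) + (c * r + e * r)) ^ 3 := h3
      _ ≤ Real.sqrt 2 * (Real.sqrt (s ^ 2 * r ^ 2 + p ^ 2) ^ 3
            + Real.sqrt (c * r + e * r) ^ 3) := hsplit1
      _ ≤ Real.sqrt 2 * ((Real.sqrt 2 * ((s * r) ^ 3 + p ^ 3))
            + (Real.sqrt 2 * ((γ * ρ) ^ 3 + (ε * ρ) ^ 3))) :=
          mul_le_mul_of_nonneg_left (add_le_add hsplit2 hsplit3) (Real.sqrt_nonneg 2)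
      _ = (Real.sqrt 2 * Real.sqrt 2) * ((s * r) ^ 3 + p ^ 3 + (γ * ρ) ^ 3 + (ε * ρ) ^ 3) := by
          ring
      _ = 2 * ((s * r) ^ 3 + p ^ 3 + (γ * ρ) ^ 3 + (ε * ρ) ^ 3) := by rw [h22]
  have hy1 : 2 * s ^ 3 * (γ * ρ) ^ 3 ≤ γ ^ 6 + s ^ 6 * ρ ^ 6 := by
    nlinarith [sq_nonneg (γ ^ 3 - s ^ 3 * ρ ^ 3)]
  have hy2 : 2 * s ^ 3 * (ε * ρ) ^ 3 ≤ ε ^ 6 + s ^ 6 * ρ ^ 6 := by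
    nlinarith [sq_nonneg (ε ^ 3 - s ^ 3 * ρ ^ 3)]
  have hfin : s ^ 3 * u ^ 3 ≤ 4 * s ^ 6 * ρ ^ 6 + 2 * s ^ 3 * p ^ 3 + γ ^ 6 + ε ^ 6 := by
    have hm' : s ^ 3 * u ^ 3
        ≤ 2 * s ^ 6 * ρ ^ 6 + 2 * s ^ 3 * p ^ 3 + 2 * s ^ 3 * (γ * ρ) ^ 3
          + 2 * s ^ 3 * (ε * ρ) ^ 3 := by
      calc s ^ 3 * u ^ 3 ≤ s ^ 3 * (2 * ((s * r) ^ 3 + p ^ 3 + (γ * ρ) ^ 3 + (ε * ρ) ^ 3)) :=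
            mul_le_mul_of_nonneg_left hcube (by positivity)
        _ = 2 * s ^ 3 * (s * r) ^ 3 + 2 * s ^ 3 * p ^ 3 + 2 * s ^ 3 * (γ * ρ) ^ 3
              + 2 * s ^ 3 * (ε * ρ) ^ 3 := by ring
        _ = 2 * s ^ 6 * ρ ^ 6 + 2 * s ^ 3 * p ^ 3 + 2 * s ^ 3 * (γ * ρ) ^ 3
              + 2 * s ^ 3 * (ε * ρ) ^ 3 := by rw [← hr2]; ring
    linarith [hm', hy1, hy2]
  have final : u ^ 3 / (4 * s)
      ≤ (4 * s ^ 6 * ρ ^ 6 + 2 * s ^ 3 * p ^ 3 + γ ^ 6 + ε ^ 6) / (4 * s ^ 4) := by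
    rw [div_le_div_iff₀ (by positivity) (by positivity)]
    calc u ^ 3 * (4 * s ^ 4) = (4 * s) * (s ^ 3 * u ^ 3) := by ring
      _ ≤ (4 * s) * (4 * s ^ 6 * ρ ^ 6 + 2 * s ^ 3 * p ^ 3 + γ ^ 6 + ε ^ 6) :=
          mul_le_mul_of_nonneg_left hfin (by positivity)
      _ = (4 * s ^ 6 * ρ ^ 6 + 2 * s ^ 3 * p ^ 3 + γ ^ 6 + ε ^ 6) * (4 * s) := by ring
  have eqr : (4 * s ^ 6 * ρ ^ 6 + 2 * s ^ 3 * p ^ 3 + γ ^ 6 + ε ^ 6) / (4 * s ^ 4)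
      = s ^ 2 * ρ ^ 6 + (γ ^ 6 + ε ^ 6) / (4 * (s ^ 2) ^ 2) + p ^ 3 / (2 * s) := by
    field_simp
    ring
  have hrr : r ^ 3 = ρ ^ 6 := by rw [← hr2]; ring
  have hcc : c ^ 3 = γ ^ 6 := by rw [← hc2]; ring
  have hee : e ^ 3 = ε ^ 6 := by rw [← he2]; ring
  rw [hrr, hcc, hee, ← eqr]
  exact final

lemma taylor_aux {E : Type*} [NormedAddCommGroup E] [NormedSpace ℝ E] [CompleteSpace E]
    (F : E → E) (L : ℝ) (hL : 0 ≤ L)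
    (hF : Differentiable ℝ F) (hFc : Continuous (fun u => fderiv ℝ F u))
    (hLip : ∀ u v : E, ‖fderiv ℝ F v - fderiv ℝ F u‖ ≤ L * ‖v - u‖) (x y : E) :
    ‖F y - F x - fderiv ℝ F x (y - x)‖ ≤ L / 2 * ‖y - x‖ ^ 2 := by
  set v := y - x with hv
  set φ' : ℝ → E := fun t => fderiv ℝ F (x + t • v) v - fderiv ℝ F x v with hφ'
  have hder : ∀ t : ℝ, HasDerivAt (fun t : ℝ => F (x + t • v) - t • fderiv ℝ F x v) (φ' t) t := by
    intro t
    have h1 : HasDerivAt (fun t : ℝ => x + t • v) v t := by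
      simpa using (((hasDerivAt_id t).smul_const v).const_add x)
    have h2 : HasDerivAt (fun t : ℝ => F (x + t • v)) (fderiv ℝ F (x + t • v) v) t :=
      (hF (x + t • v)).hasFDerivAt.comp_hasDerivAt t h1
    have h3 : HasDerivAt (fun t : ℝ => t • fderiv ℝ F x v) (fderiv ℝ F x v) t := by
      simpa using (hasDerivAt_id t).smul_const (fderiv ℝ F x v)
    exact h2.sub h3
  have hcont : Continuous φ' := by
    have hc1 : Continuous fun t : ℝ => fderiv ℝ F (x + t • v) :=
      hFc.comp (by continuity)
    exact (((ContinuousLinearMap.apply ℝ E v).continuous).comp hc1).sub continuous_const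
  have hint : IntervalIntegrable φ' MeasureTheory.volume 0 1 := hcont.intervalIntegrable 0 1
  have heq : (∫ t in (0:ℝ)..1, φ' t) = F y - F x - fderiv ℝ F x v := by
    rw [intervalIntegral.integral_eq_sub_of_hasDerivAt (fun t _ => hder t) hint]
    simp only [one_smul, zero_smul, sub_zero]
    rw [hv]
    simp only [add_sub_cancel]
    abel_nf
  have hptwise : ∀ t ∈ Set.Ioc (0:ℝ) 1, ‖φ' t‖ ≤ L * ‖v‖ ^ 2 * t := by
    intro t ht
    have heq2 : φ' t = (fderiv ℝ F (x + t • v) - fderiv ℝ F x) v := by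
      simp [hφ', ContinuousLinearMap.sub_apply]
    rw [heq2]
    calc ‖(fderiv ℝ F (x + t • v) - fderiv ℝ F x) v‖
        ≤ ‖fderiv ℝ F (x + t • v) - fderiv ℝ F x‖ * ‖v‖ :=
          ContinuousLinearMap.le_opNorm _ _
      _ ≤ (L * ‖x + t • v - x‖) * ‖v‖ :=
          mul_le_mul_of_nonneg_right (hLip x (x + t • v)) (norm_nonneg v)
      _ = L * ‖v‖ ^ 2 * t := by
          rw [add_sub_cancel_left, norm_smul, Real.norm_eq_abs, abs_of_pos ht.1]; ring
  have hbound : ‖∫ t in (0:ℝ)..1, φ' t‖ ≤ |∫ t in (0:ℝ)..1, L * ‖v‖ ^ 2 * t| := by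
    apply intervalIntegral.norm_integral_le_abs_of_norm_le
    · rw [Set.uIoc_of_le (by norm_num : (0:ℝ) ≤ 1)]
      exact ((MeasureTheory.ae_restrict_mem measurableSet_Ioc).mono fun t ht => hptwise t ht)
    · exact (continuous_const.mul continuous_id).intervalIntegrable 0 1
  have hval : (∫ t in (0:ℝ)..1, L * ‖v‖ ^ 2 * t) = L / 2 * ‖v‖ ^ 2 := by
    rw [intervalIntegral.integral_const_mul, integral_id]
    norm_num
    ring
  rw [← heq]
  rw [hval] at hbound
  calc ‖∫ t in (0:ℝ)..1, φ' t‖ ≤ |L / 2 * ‖v‖ ^ 2| := hbound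
    _ = L / 2 * ‖v‖ ^ 2 := abs_of_nonneg (by positivity)

lemma rpow_three_halves (X : ℝ) (hX : 0 ≤ X) : X ^ ((3:ℝ)/2) = Real.sqrt X ^ 3 := by
  rw [Real.sqrt_eq_rpow, ← Real.rpow_natCast (X ^ ((1:ℝ)/2)) 3, ← Real.rpow_mul hX]
  norm_num

/-- inequality (3.17) in the proof of Theorem 1: lower bound on the cubic
term `σ·r³` via the new (sub)gradient norm. -/
theorem stmt_16 {n : ℕ} (hn : 1 ≤ n)
    (f ψ : EuclideanSpace ℝ (Fin n) → ℝ) (Q : Set (EuclideanSpace ℝ (Fin n)))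
    (L : ℝ) (hL : 0 ≤ L)
    (hf : ContDiff ℝ 2 f)
    (hLip : ∀ u v : EuclideanSpace ℝ (Fin n),
      ‖fderiv ℝ (gradient f) v - fderiv ℝ (gradient f) u‖ ≤ L * ‖v - u‖)
    (hQconv : Convex ℝ Q) (hψconv : ConvexOn ℝ Q ψ)
    (x : EuclideanSpace ℝ (Fin n)) (hx : x ∈ Q) (z : EuclideanSpace ℝ (Fin n))
    (σ δg δB : ℝ) (hσ : σ ≥ 2 * L) (hσ0 : 0 < σ) (hδg : 0 ≤ δg) (hδB : 0 ≤ δB)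
    (g : EuclideanSpace ℝ (Fin n))
    (B : EuclideanSpace ℝ (Fin n) →L[ℝ] EuclideanSpace ℝ (Fin n))
    (hBsym : ∀ u v : EuclideanSpace ℝ (Fin n), ⟪B u, v⟫ = ⟪u, B v⟫)
    (xp : EuclideanSpace ℝ (Fin n)) (hxp : xp ∈ Q)
    (ψp : EuclideanSpace ℝ (Fin n))
    (hψp : ∀ y : EuclideanSpace ℝ (Fin n), ψ xp + ⟪ψp, y - xp⟫ ≤ ψ y)
    (hmodel : ‖g + B (xp - x) + (σ / 2 * ‖xp - x‖) • (xp - x) + ψp‖ ≤ σ / 4 * ‖xp - x‖ ^ 2)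
    (hg : ‖g - gradient f x‖ ≤ δg)
    (hB : ‖B - fderiv ℝ (gradient f) z‖ ≤ δB) :
    σ * ‖xp - x‖ ^ 3 ≥
      1 / (4 * Real.sqrt σ) * ‖gradient f xp + ψp‖ ^ ((3 : ℝ) / 2)
        - 1 / (4 * σ ^ 2) * (δB ^ 3 + L ^ 3 * ‖x - z‖ ^ 3)
        - δg ^ ((3 : ℝ) / 2) / (2 * Real.sqrt σ) := by
  have hF1 : ContDiff ℝ 1 (gradient f) := by
    have h1 : ContDiff ℝ 1 (fderiv ℝ f) := hf.fderiv_right (by norm_num)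
    exact ((InnerProductSpace.toDual ℝ (EuclideanSpace ℝ (Fin n))).symm.contDiff).comp h1
  have hFd : Differentiable ℝ (gradient f) := hF1.differentiable one_ne_zero
  have hFdc : Continuous (fun u => fderiv ℝ (gradient f) u) := hF1.continuous_fderiv one_ne_zero
  have hT : ‖gradient f xp - gradient f x - fderiv ℝ (gradient f) x (xp - x)‖
      ≤ L / 2 * ‖xp - x‖ ^ 2 := taylor_aux (gradient f) L hL hFd hFdc hLip x xp
  have decomp : gradient f xp + ψp =
      (g + B (xp - x) + (σ / 2 * ‖xp - x‖) • (xp - x) + ψp)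
      + (gradient f xp - gradient f x - fderiv ℝ (gradient f) x (xp - x))
      + (gradient f x - g)
      + (fderiv ℝ (gradient f) x (xp - x) - fderiv ℝ (gradient f) z (xp - x))
      + (fderiv ℝ (gradient f) z (xp - x) - B (xp - x))
      - (σ / 2 * ‖xp - x‖) • (xp - x) := by abel
  have n3 : ‖gradient f x - g‖ ≤ δg := by rw [norm_sub_rev]; exact hg
  have n4 : ‖fderiv ℝ (gradient f) x (xp - x) - fderiv ℝ (gradient f) z (xp - x)‖
      ≤ (L * ‖x - z‖) * ‖xp - x‖ := by
    rw [← ContinuousLinearMap.sub_apply]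
    calc ‖(fderiv ℝ (gradient f) x - fderiv ℝ (gradient f) z) (xp - x)‖
        ≤ ‖fderiv ℝ (gradient f) x - fderiv ℝ (gradient f) z‖ * ‖xp - x‖ :=
          ContinuousLinearMap.le_opNorm _ _
      _ ≤ (L * ‖x - z‖) * ‖xp - x‖ :=
          mul_le_mul_of_nonneg_right (hLip z x) (norm_nonneg _)
  have n5 : ‖fderiv ℝ (gradient f) z (xp - x) - B (xp - x)‖ ≤ δB * ‖xp - x‖ := by
    rw [← ContinuousLinearMap.sub_apply]
    calc ‖(fderiv ℝ (gradient f) z - B) (xp - x)‖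
        ≤ ‖fderiv ℝ (gradient f) z - B‖ * ‖xp - x‖ := ContinuousLinearMap.le_opNorm _ _
      _ ≤ δB * ‖xp - x‖ := by
          apply mul_le_mul_of_nonneg_right _ (norm_nonneg _)
          rw [norm_sub_rev]; exact hB
  have n6 : ‖(σ / 2 * ‖xp - x‖) • (xp - x)‖ = σ / 2 * ‖xp - x‖ ^ 2 := by
    rw [norm_smul, Real.norm_eq_abs, abs_of_nonneg (by positivity)]; ring
  have hG : ‖gradient f xp + ψp‖
      ≤ σ * ‖xp - x‖ ^ 2 + δg + δB * ‖xp - x‖ + (L * ‖x - z‖) * ‖xp - x‖ := by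
    set A1 := g + B (xp - x) + (σ / 2 * ‖xp - x‖) • (xp - x) + ψp with hA1
    set A2 := gradient f xp - gradient f x - fderiv ℝ (gradient f) x (xp - x) with hA2
    set A3 := gradient f x - g with hA3
    set A4 := fderiv ℝ (gradient f) x (xp - x) - fderiv ℝ (gradient f) z (xp - x) with hA4
    set A5 := fderiv ℝ (gradient f) z (xp - x) - B (xp - x) with hA5
    set A6 := (σ / 2 * ‖xp - x‖) • (xp - x) with hA6
    have chain : ‖gradient f xp + ψp‖ ≤ ‖A1‖ + ‖A2‖ + ‖A3‖ + ‖A4‖ + ‖A5‖ + ‖A6‖ := by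
      rw [decomp]
      have t0 : ‖A1 + A2 + A3 + A4 + A5 - A6‖ ≤ ‖A1 + A2 + A3 + A4 + A5‖ + ‖A6‖ :=
        norm_sub_le _ _
      have t1 : ‖A1 + A2 + A3 + A4 + A5‖ ≤ ‖A1 + A2 + A3 + A4‖ + ‖A5‖ := norm_add_le _ _
      have t2 : ‖A1 + A2 + A3 + A4‖ ≤ ‖A1 + A2 + A3‖ + ‖A4‖ := norm_add_le _ _
      have t3 : ‖A1 + A2 + A3‖ ≤ ‖A1 + A2‖ + ‖A3‖ := norm_add_le _ _
      have t4 : ‖A1 + A2‖ ≤ ‖A1‖ + ‖A2‖ := norm_add_le _ _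
      linarith
    have hhalf : L / 2 * ‖xp - x‖ ^ 2 ≤ σ / 4 * ‖xp - x‖ ^ 2 := by
      apply mul_le_mul_of_nonneg_right _ (sq_nonneg _)
      linarith
    have h6 : ‖A6‖ = σ / 2 * ‖xp - x‖ ^ 2 := n6
    linarith [chain, hmodel, hT, n3, n4, n5, hhalf, h6.le, h6.ge]
  have hsσ : 0 < Real.sqrt σ := Real.sqrt_pos.mpr hσ0
  have hs2 : Real.sqrt σ ^ 2 = σ := Real.sq_sqrt hσ0.le
  have hGnn : 0 ≤ ‖gradient f xp + ψp‖ := norm_nonneg _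
  have huG : Real.sqrt ‖gradient f xp + ψp‖ ^ 2 = ‖gradient f xp + ψp‖ := Real.sq_sqrt hGnn
  have hpg : Real.sqrt δg ^ 2 = δg := Real.sq_sqrt hδg
  have hmain := scalar_main (Real.sqrt σ) (Real.sqrt ‖gradient f xp + ψp‖) (Real.sqrt δg)
      ‖xp - x‖ δB (L * ‖x - z‖) hsσ (Real.sqrt_nonneg _) (Real.sqrt_nonneg _)
      (norm_nonneg _) hδB (mul_nonneg hL (norm_nonneg _))
      (by rw [huG, hs2, hpg]; linarith [hG])
  rw [hs2, mul_pow] at hmain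
  rw [ge_iff_le, rpow_three_halves _ hGnn, rpow_three_halves _ hδg]
  have e1 : 1 / (4 * Real.sqrt σ) * Real.sqrt ‖gradient f xp + ψp‖ ^ 3
      = Real.sqrt ‖gradient f xp + ψp‖ ^ 3 / (4 * Real.sqrt σ) := by ring
  have e2 : 1 / (4 * σ ^ 2) * (δB ^ 3 + L ^ 3 * ‖x - z‖ ^ 3)
      = (δB ^ 3 + L ^ 3 * ‖x - z‖ ^ 3) / (4 * σ ^ 2) := by ring
  rw [e1, e2]
  linarith [hmain]
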